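/- Let n ≥ 1 and let c, d : ℝ → ℝ³ be differentiable curves and Λ, M : ℝ → ℝ functions with Λ(u) ≠ M(u) for all u, such that c(u) + ((Λ(u) − u)/n)·c'(u) = d(u) + ((M(u) − u)/n)·d'(u) for all u. Define the ruled surface b(u,v) = (1−v)c(u) + v·d(u). Then for each u, at the value v* = (u − M(u))/(Λ(u) − M(u)) the partial derivatives ∂b/∂u(u, v*) = (1−v*)c'(u) + v*·d'(u) and ∂b/∂v(u, v*) = d(u) − c(u) are parallel; precisely, (1−v*)c'(u) + v*·d'(u) = (n/(Λ(u) − M(u)))·(d(u) − c(u)). Hence the parametrisation of the developable surface is singular along the line v = (u − M(u))/(Λ(u) − M(u)), the edge of regression. -/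
import Mathlib


/-- along the line `v* = (u − M(u))/(Λ(u) − M(u))` the partial
derivatives `b_u(u,v*) = (1−v*)c'(u) + v*·d'(u)` and `b_v(u,v*) = d(u) − c(u)` of
the developable patch `b(u,v) = (1−v)c(u) + v·d(u)` are parallel; precisely,
`(1−v*)·c'(u) + v*·d'(u) = (n/(Λ(u)−M(u)))·(d(u)−c(u))`. This line is the edge of
regression, where the parametrisation is singular. -/
theorem edge_of_regression_parametric_equation
    (n : ℕ) (hn : 1 ≤ n) (c d : ℝ → Fin 3 → ℝ)
    (hc : Differentiable ℝ c) (hd : Differentiable ℝ d)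
    (Λ M : ℝ → ℝ) (hΛM : ∀ u, Λ u ≠ M u)
    (hdev : ∀ u, c u + ((Λ u - u) / (n : ℝ)) • deriv c u
               = d u + ((M u - u) / (n : ℝ)) • deriv d u) :
    ∀ u, (1 - (u - M u) / (Λ u - M u)) • deriv c u
         + ((u - M u) / (Λ u - M u)) • deriv d u
       = ((n : ℝ) / (Λ u - M u)) • (d u - c u) := by
  intro u
  have hs : Λ u - M u ≠ 0 := sub_ne_zero.mpr (hΛM u)
  have hn0 : (n : ℝ) ≠ 0 := Nat.cast_ne_zero.mpr (by omega)
  funext i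
  have hi := congrFun (hdev u) i
  simp only [Pi.add_apply, Pi.smul_apply, Pi.sub_apply, smul_eq_mul] at hi ⊢
  field_simp at hi ⊢
  linear_combination hi
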